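/- Let A = {α_1, …, α_n} ⊆ 𝔽_q with |A| = n, let 1 < k < n, and let θ ∈ 𝔽_q with θ ≠ 0. For any a ∈ 𝔽_q with a ≠ 0 and any f_{k,θ} ∈ S_{k,θ}, the vector u = (g(α_1), …, g(α_n)) ∈ 𝔽_q^n, where g(x) = a x^k + f_{k,θ}(x), is a deep hole of TRS_k(A, θ); that is, d(u, TRS_k(A, θ)) = n − k. -/

import Mathlib

open Polynomial Finset

/-- The set `S_{k,θ}` of twisted polynomials
`Σ_{i=0}^{k-2} f_i x^i + f_{k-1}(x^{k-1} + θ x^k)`. -/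
def Sset (F : Type*) [Field F] (k : ℕ) (θ : F) : Set (Polynomial F) :=
  {p | ∃ f : ℕ → F, p = (∑ i ∈ Finset.range (k - 1), Polynomial.C (f i) * Polynomial.X ^ i)
        + Polynomial.C (f (k - 1)) * (Polynomial.X ^ (k - 1) + Polynomial.C θ * Polynomial.X ^ k)}

/-- The twisted Reed–Solomon code `TRS_k(A, θ)` for the evaluation sequence `α`. -/
def TRS {F : Type*} [Field F] {n : ℕ} (α : Fin n → F) (k : ℕ) (θ : F) : Set (Fin n → F) :=
  {v | ∃ p ∈ Sset F k θ, v = fun j => p.eval (α j)}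

/-- The (Hamming) error distance `d(u, C)` from a word `u` to a code `C`. -/
noncomputable def distTo {F : Type*} [DecidableEq F] {n : ℕ} (u : Fin n → F)
    (C : Set (Fin n → F)) : ℕ :=
  sInf {d | ∃ c ∈ C, hammingDist u c = d}

/-- The covering radius `ρ(C) = max_u d(u, C)` of a code `C`. -/
noncomputable def covRad {F : Type*} [DecidableEq F] {n : ℕ} (C : Set (Fin n → F)) : ℕ :=
  sSup {d | ∃ u, distTo u C = d}

/-- `u` is a deep hole of `C` if `d(u, C) = ρ(C)`. -/
def IsDeepHole {F : Type*} [DecidableEq F] {n : ℕ} (C : Set (Fin n → F)) (u : Fin n → F) :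
    Prop :=
  distTo u C = covRad C

/-- The column vector `c_{r,θ}(a) = (1, a, …, a^{r-2}, a^{r-1} - θ a^r)ᵀ ∈ 𝔽_q^r`. -/
def crv (F : Type*) [Field F] (r : ℕ) (θ a : F) : Fin r → F :=
  fun i => if (i : ℕ) = r - 1 then a ^ (r - 1) - θ * a ^ r else a ^ (i : ℕ)

/-- The parity-check matrix `H` whose `j`-th column is `c_{r,θ}(α_j)`. -/
def Hmat {F : Type*} [Field F] {n : ℕ} (r : ℕ) (θ : F) (α : Fin n → F) :
    Matrix (Fin r) (Fin n) F :=
  Matrix.of fun i j => crv F r θ (α j) i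

lemma coeff_canon {F : Type*} [Field F] (k : ℕ) (θ : F) (f : ℕ → F) (m : ℕ) :
    ((∑ i ∈ Finset.range (k - 1), Polynomial.C (f i) * Polynomial.X ^ i)
      + Polynomial.C (f (k - 1)) * (Polynomial.X ^ (k - 1) + Polynomial.C θ * Polynomial.X ^ k)).coeff m
    = (if m < k - 1 then f m else 0)
      + f (k-1) * ((if m = k - 1 then 1 else 0) + θ * (if m = k then 1 else 0)) := by
  simp only [coeff_add, finset_sum_coeff, coeff_C_mul, coeff_X_pow, mul_add, mul_ite, mul_one,
    mul_zero]
  congr 1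
  rw [Finset.sum_ite_eq (Finset.range (k-1)) m (fun i => f i)]
  simp [Finset.mem_range]

lemma mem_Sset_iff {F : Type*} [Field F] {k : ℕ} (hk : 1 ≤ k) (θ : F) (p : Polynomial F) :
    p ∈ Sset F k θ ↔ p.natDegree ≤ k ∧ p.coeff k = θ * p.coeff (k - 1) := by
  constructor
  · rintro ⟨f, rfl⟩
    constructor
    · rw [natDegree_le_iff_coeff_eq_zero]
      intro m hm
      rw [coeff_canon k θ f m]
      have h1 : ¬ m < k - 1 := by omega
      have h2 : m ≠ k - 1 := by omega
      have h3 : m ≠ k := by omega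
      simp [h1, h2, h3]
    · rw [coeff_canon k θ f k, coeff_canon k θ f (k-1)]
      have h1 : ¬ k < k - 1 := by omega
      have h2 : k ≠ k - 1 := by omega
      have h4 : ¬ k - 1 < k - 1 := by omega
      have h5 : k - 1 ≠ k := by omega
      simp [h1, h2, h4, h5]
      ring
  · rintro ⟨hd, hc⟩
    refine ⟨fun i => p.coeff i, ?_⟩
    ext m
    rw [coeff_canon k θ (fun i => p.coeff i) m]
    rcases lt_trichotomy m (k-1) with h | h | h
    · have h2 : m ≠ k - 1 := by omega
      have h3 : m ≠ k := by omega
      simp [h, h2, h3]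
    · subst h
      have h1 : ¬ k - 1 < k - 1 := by omega
      have h5 : k - 1 ≠ k := by omega
      simp [h1, h5]
    · rcases Nat.lt_or_ge m (k+1) with h6 | h6
      · have hm : m = k := by omega
        have h1 : ¬ m < k - 1 := by omega
        have h2 : m ≠ k - 1 := by omega
        rw [hm, hc]
        simp [show ¬ k < k - 1 from by omega, show k ≠ k - 1 from by omega]
        ring
      · have h1 : ¬ m < k - 1 := by omega
        have h2 : m ≠ k - 1 := by omega
        have h3 : m ≠ k := by omega
        have : p.coeff m = 0 := coeff_eq_zero_of_natDegree_lt (by omega)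
        simp [h1, h2, h3, this]

lemma dist_lower {F : Type*} [Field F] [DecidableEq F] {n k : ℕ}
    (α : Fin n → F) (hα : Function.Injective α) (u c : Fin n → F)
    (D : Polynomial F) (hD : D ≠ 0) (hdeg : D.natDegree ≤ k)
    (huc : ∀ j, u j - c j = D.eval (α j)) :
    n - k ≤ hammingDist u c := by
  classical
  set E : Finset (Fin n) := Finset.univ.filter (fun j => u j = c j) with hE
  have hcard : E.card ≤ k := by
    have h1 : E.card ≤ D.roots.toFinset.card := by
      apply Finset.card_le_card_of_injOn α
      · intro j hj
        rw [hE, Finset.mem_coe, Finset.mem_filter] at hj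
        rw [Finset.mem_coe, Multiset.mem_toFinset, Polynomial.mem_roots hD]
        have := huc j
        rw [hj.2, sub_self] at this
        exact this.symm
      · exact fun x _ y _ h => hα h
    calc E.card ≤ D.roots.toFinset.card := h1
      _ ≤ Multiset.card D.roots := Multiset.toFinset_card_le _
      _ ≤ D.natDegree := Polynomial.card_roots' D
      _ ≤ k := hdeg
  have hham : (Finset.univ.filter (fun j => u j ≠ c j)).card = hammingDist u c := rfl
  have hsub : (Finset.univ : Finset (Fin n)) ⊆ E ∪ Finset.univ.filter (fun j => u j ≠ c j) := by
    intro j _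
    by_cases h : u j = c j <;> simp [hE, h]
  have hN : n ≤ E.card + hammingDist u c := by
    rw [← hham]
    calc n = (Finset.univ : Finset (Fin n)).card := by simp
      _ ≤ (E ∪ Finset.univ.filter (fun j => u j ≠ c j)).card := Finset.card_le_card hsub
      _ ≤ E.card + (Finset.univ.filter (fun j => u j ≠ c j)).card := Finset.card_union_le _ _
  omega

lemma exists_good_subset {F : Type*} [Field F] {n k : ℕ} (hk : 1 ≤ k) (hkn : k < n)
    (α : Fin n → F) (hα : Function.Injective α) (θ : F) :
    ∃ s : Finset (Fin n), s.card = k ∧ 1 + θ * ∑ j ∈ s, α j ≠ 0 := by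
  classical
  obtain ⟨t, -, htc⟩ := Finset.exists_subset_card_eq
    (show k+1 ≤ (Finset.univ : Finset (Fin n)).card by simp; omega)
  have h2 : 1 < t.card := by omega
  obtain ⟨i, hi, j, hj, hij⟩ := Finset.one_lt_card.mp h2
  by_contra hcon
  push_neg at hcon
  have e1 := hcon (t.erase i) (by rw [Finset.card_erase_of_mem hi]; omega)
  have e2 := hcon (t.erase j) (by rw [Finset.card_erase_of_mem hj]; omega)
  have s1 : α i + ∑ x ∈ t.erase i, α x = ∑ x ∈ t, α x := Finset.add_sum_erase t α hi
  have s2 : α j + ∑ x ∈ t.erase j, α x = ∑ x ∈ t, α x := Finset.add_sum_erase t α hj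
  have hθ : θ ≠ 0 := by
    rintro rfl; simp at e1
  have h2 : θ * α i = θ * α j := by
    linear_combination θ * s1 - θ * s2 - e1 + e2
  exact hij (hα (mul_left_cancel₀ hθ h2))

/-- For `a ≠ 0` and `f_{k,θ} ∈ S_{k,θ}`, the word
`u = (g(α_1), …, g(α_n))` with `g(x) = a x^k + f_{k,θ}(x)` is a deep hole of
`TRS_k(A, θ)`, i.e. `d(u, TRS_k(A, θ)) = n - k`. -/
theorem standard_deep_holes {F : Type*} [Field F] [Fintype F] [DecidableEq F]
    (n k : ℕ) (hk1 : 1 < k) (hkn : k < n) (α : Fin n → F) (hα : Function.Injective α)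
    (θ : F) (hθ : θ ≠ 0) (a : F) (ha : a ≠ 0) (p : Polynomial F) (hp : p ∈ Sset F k θ) :
    distTo (fun j => (Polynomial.C a * Polynomial.X ^ k + p).eval (α j)) (TRS α k θ)
      = n - k := by
  classical
  have hk : 1 ≤ k := le_of_lt hk1
  set g : Polynomial F := Polynomial.C a * Polynomial.X ^ k + p with hg
  set u : Fin n → F := fun j => g.eval (α j) with hu
  obtain ⟨hpd, hpc⟩ := (mem_Sset_iff hk θ p).mp hp
  -- Lower bound part: every codeword is at distance ≥ n - k
  have lower : ∀ c ∈ TRS α k θ, n - k ≤ hammingDist u c := by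
    rintro c ⟨q, hq, rfl⟩
    obtain ⟨hqd, hqc⟩ := (mem_Sset_iff hk θ q).mp hq
    set D := g - q with hD
    have hDdeg : D.natDegree ≤ k := by
      apply le_trans (Polynomial.natDegree_sub_le _ _)
      simp only [max_le_iff]
      refine ⟨le_trans (Polynomial.natDegree_add_le _ _) ?_, hqd⟩
      simp only [max_le_iff]
      exact ⟨le_trans (Polynomial.natDegree_C_mul_le _ _) (le_of_eq (Polynomial.natDegree_X_pow k)), hpd⟩
    have hDne : D ≠ 0 := by
      intro h0
      have c1 : D.coeff (k-1) = 0 := by rw [h0]; simp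
      have c2 : D.coeff k = 0 := by rw [h0]; simp
      rw [hD, Polynomial.coeff_sub, hg, Polynomial.coeff_add, Polynomial.coeff_C_mul,
        Polynomial.coeff_X_pow, if_pos rfl, mul_one, hpc, hqc] at c2
      rw [hD, Polynomial.coeff_sub, hg, Polynomial.coeff_add, Polynomial.coeff_C_mul,
        Polynomial.coeff_X_pow, if_neg (by omega), mul_zero, zero_add] at c1
      have heq : p.coeff (k-1) = q.coeff (k-1) := sub_eq_zero.mp c1
      rw [heq] at c2
      exact ha (by linear_combination c2)
    exact dist_lower α hα u _ D hDne hDdeg (fun j => by simp [hu, hD])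
  -- Upper bound: construct a codeword at distance exactly n - k
  obtain ⟨s, hsc, hs1⟩ := exists_good_subset hk hkn α hα θ
  set σ : F := ∑ j ∈ s, α j with hσ
  set c0 : F := a / (1 + θ * σ) with hc0
  have hc0ne : c0 ≠ 0 := div_ne_zero ha hs1
  set P : Polynomial F := ∏ j ∈ s, (Polynomial.X - Polynomial.C (α j)) with hP
  have hPmonic : P.Monic := Polynomial.monic_prod_of_monic _ _ fun i _ => Polynomial.monic_X_sub_C _
  have hPdeg : P.natDegree = k := by
    rw [hP, Polynomial.natDegree_prod_of_monic _ _ (fun i _ => Polynomial.monic_X_sub_C _)]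
    simp [hsc]
  set h : Polynomial F := Polynomial.C c0 * P with hh
  set r : Polynomial F := Polynomial.C a * Polynomial.X ^ k - h with hr
  have hPk : P.coeff k = 1 := by rw [← hPdeg]; exact hPmonic.coeff_natDegree
  have hPk1 : P.coeff (k-1) = -σ := by
    have hnext : P.nextCoeff = -σ := Polynomial.prod_X_sub_C_nextCoeff α
    rwa [Polynomial.nextCoeff_of_natDegree_pos (by omega), hPdeg] at hnext
  have hr_mem : r ∈ Sset F k θ := by
    rw [mem_Sset_iff hk θ]
    constructor
    · apply le_trans (Polynomial.natDegree_sub_le _ _)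
      simp only [max_le_iff]
      constructor
      · exact le_trans (Polynomial.natDegree_C_mul_le _ _) (le_of_eq (Polynomial.natDegree_X_pow k))
      · exact le_trans (Polynomial.natDegree_C_mul_le _ _) (le_of_eq hPdeg)
    · have e1 : r.coeff k = a - c0 := by
        rw [hr, Polynomial.coeff_sub, Polynomial.coeff_C_mul, Polynomial.coeff_X_pow,
          if_pos rfl, mul_one, hh, Polynomial.coeff_C_mul, hPk, mul_one]
      have e2 : r.coeff (k-1) = c0 * σ := by
        rw [hr, Polynomial.coeff_sub, Polynomial.coeff_C_mul, Polynomial.coeff_X_pow,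
          if_neg (by omega), mul_zero, hh, Polynomial.coeff_C_mul, hPk1]
        ring
      rw [e1, e2, hc0]
      field_simp
      ring
  set q : Polynomial F := p + r with hq
  have hq_mem : q ∈ Sset F k θ := by
    obtain ⟨hrd, hrc⟩ := (mem_Sset_iff hk θ r).mp hr_mem
    rw [mem_Sset_iff hk θ]
    refine ⟨le_trans (Polynomial.natDegree_add_le _ _) (by simp [hpd, hrd]), ?_⟩
    rw [hq, Polynomial.coeff_add, Polynomial.coeff_add, hpc, hrc]
    ring
  set v : Fin n → F := fun j => q.eval (α j) with hv
  have hv_mem : v ∈ TRS α k θ := ⟨q, hq_mem, rfl⟩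
  have hgq : g - q = h := by rw [hg, hq, hr]; ring
  have hdist_le : hammingDist u v ≤ n - k := by
    have hsub : (Finset.univ.filter (fun j => u j ≠ v j)) ⊆ Finset.univ \ s := by
      intro j hj
      rw [Finset.mem_filter] at hj
      rw [Finset.mem_sdiff]
      refine ⟨Finset.mem_univ _, fun hjs => hj.2 ?_⟩
      have : (g - q).eval (α j) = 0 := by
        rw [hgq, hh]
        simp only [Polynomial.eval_mul, Polynomial.eval_C, hP, Polynomial.eval_prod]
        rw [Finset.prod_eq_zero hjs (by simp)]
        ring
      have := sub_eq_zero.mp (by simpa [hu, hv] using this)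
      exact this
    calc hammingDist u v ≤ (Finset.univ \ s).card := Finset.card_le_card hsub
      _ = n - k := by rw [Finset.card_sdiff_of_subset (Finset.subset_univ s)]; simp [hsc]
  have hdist_eq : hammingDist u v = n - k := le_antisymm hdist_le (lower v hv_mem)
  have hmem : (n - k) ∈ {d | ∃ c ∈ TRS α k θ, hammingDist u c = d} := ⟨v, hv_mem, hdist_eq⟩
  refine le_antisymm (Nat.sInf_le hmem) (le_csInf ⟨_, hmem⟩ ?_)
  rintro d ⟨c, hc, rfl⟩
  exact lower c hc
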